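/- Let K be a field and A, B ∈ K^{2×2}. The 2×2×2 tensor (A;B) over K is nonsingular (i.e., xA + yB is a nonsingular matrix for all (x,y) ≠ (0,0) in K²) if and only if det(A) ≠ 0 and the quadratic equation det(A)·x² − (A·B)·x + det(B) = 0 has no solution x in K, where A·B := det(A+B) − det(A) − det(B). -/

import Mathlib

open Matrix BigOperators

/-- Cayley hyperdeterminant (up to sign) of a 2×2×2 tensor given by matrix slices A, B. -/
noncomputable def Delta {F : Type*} [Field F] (A B : Matrix (Fin 2) (Fin 2) F) : F :=
  ((A + B).det - (A - B).det) ^ 2 / 4 - 4 * A.det * B.det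

/-- Rank of a 2×2×2 tensor, given as a pair of 2×2 matrix slices. -/
noncomputable def trank3 {F : Type*} [Field F] (T : Fin 2 → Matrix (Fin 2) (Fin 2) F) : ℕ :=
  sInf {r | ∃ u v w : Fin r → Fin 2 → F, ∀ k i j, T k i j = ∑ s, u s k * v s i * w s j}

/-- Rank of a 2×2×2×2 tensor, given as a 2×2 array of 2×2 matrix slices. -/
noncomputable def trank4 {F : Type*} [Field F] (T : Fin 2 → Fin 2 → Matrix (Fin 2) (Fin 2) F) : ℕ :=
  sInf {r | ∃ u v w z : Fin r → Fin 2 → F,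
    ∀ k l i j, T k l i j = ∑ s, u s k * v s l * w s i * z s j}

/-- The 2×2 matrix with columns u and v. -/
def col2 {F : Type*} [Field F] (u v : Fin 2 → F) : Matrix (Fin 2) (Fin 2) F :=
  Matrix.of fun i j => ![u, v] j i

lemma det_pencil {K : Type*} [Field K] (A B : Matrix (Fin 2) (Fin 2) K) (x y : K) :
    (x • A + y • B).det =
      x ^ 2 * A.det + x * y * ((A + B).det - A.det - B.det) + y ^ 2 * B.det := by
  simp [Matrix.det_fin_two, Matrix.add_apply, Matrix.smul_apply]
  ring

theorem stmt11 {K : Type*} [Field K] (A B : Matrix (Fin 2) (Fin 2) K) :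
    (∀ x y : K, (x ≠ 0 ∨ y ≠ 0) → (x • A + y • B).det ≠ 0) ↔
      A.det ≠ 0 ∧
        ¬∃ x : K, A.det * x ^ 2 - ((A + B).det - A.det - B.det) * x + B.det = 0 := by
  constructor
  · intro h
    refine ⟨by simpa [det_pencil] using h 1 0 (Or.inl one_ne_zero), ?_⟩
    rintro ⟨t, ht⟩
    apply h t (-1) (Or.inr (by norm_num))
    rw [det_pencil]
    linear_combination ht
  · rintro ⟨hA, hroot⟩ x y hxy hdet
    rw [det_pencil] at hdet
    rcases eq_or_ne y 0 with hy | hy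
    · subst hy
      have hx : x ≠ 0 := hxy.resolve_right (fun h => h rfl)
      exact mul_ne_zero (pow_ne_zero 2 hx) hA (by linear_combination hdet)
    · apply hroot
      refine ⟨-x / y, ?_⟩
      field_simp
      linear_combination hdet
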